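/- Let ρ be a d×d complex positive definite matrix with trace 1 and let A_1, …, A_N (N ≥ 2) be d×d Hermitian matrices. Suppose that for each i a Hermitian matrix L_i satisfies i[ρ, A_i] = (1/2)(L_i ρ + ρ L_i), and for each pair i < j and each sign ± a Hermitian matrix L_{ij}^± satisfies i[ρ, A_i ± A_j] = (1/2)(L_{ij}^± ρ + ρ L_{ij}^±). Define I^F_ρ(A_i) = (1/4) Tr(ρ (L_i)²) and I^F_ρ(A_i ± A_j) = (1/4) Tr(ρ (L_{ij}^±)²). Then: ∑_{i=1}^N I^F_ρ(A_i) ≥ (1/(2N − 2)) · [ (2/(N(N − 1))) · (∑_{1 ≤ i < j ≤ N} √(I^F_ρ(A_i + A_j)))² + ∑_{1 ≤ i < j ≤ N} I^F_ρ(A_i − A_j) ], and also ∑_{i=1}^N I^F_ρ(A_i) ≥ (1/(2N − 2)) · [ (2/(N(N − 1))) · (∑_{1 ≤ i < j ≤ N} √(I^F_ρ(A_i − A_j)))² + ∑_{1 ≤ i < j ≤ N} I^F_ρ(A_i + A_j) ], where √ denotes the real square root. -/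

import Mathlib

open Matrix Finset
open scoped ComplexOrder

/-- The quantum Fisher information `I^F_ρ = (1/4) Tr(ρ L²)` computed from a
symmetric logarithmic derivative `L`. -/
noncomputable def fisherInfo {d : ℕ} (ρ L : Matrix (Fin d) (Fin d) ℂ) : ℝ :=
  ((1 / 4 : ℂ) * (ρ * (L * L)).trace).re

/-! ### Auxiliary trace algebra -/

lemma sld_trace {d : ℕ} (ρ X Lx M : Matrix (Fin d) (Fin d) ℂ)
    (h : Complex.I • (ρ * X - X * ρ) = (1 / 2 : ℂ) • (Lx * ρ + ρ * Lx)) :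
    (ρ * (Lx * M + M * Lx)).trace
      = 2 * Complex.I * (M * (ρ * X - X * ρ)).trace := by
  have h2 : Lx * ρ + ρ * Lx = (2 * Complex.I) • (ρ * X - X * ρ) := by
    have h' := congrArg (fun Y => (2:ℂ) • Y) h
    simp only [smul_smul] at h'
    norm_num at h'
    rw [← h']
  have t1 : (ρ * (Lx * M)).trace = (M * (ρ * Lx)).trace := by
    rw [← mul_assoc, trace_mul_comm]
  have t2 : (ρ * (M * Lx)).trace = (M * (Lx * ρ)).trace := by
    rw [trace_mul_comm ρ (M * Lx), mul_assoc]
  have hcyc : (ρ * (Lx * M + M * Lx)).trace = (M * (Lx * ρ + ρ * Lx)).trace := by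
    rw [mul_add, mul_add, trace_add, trace_add, t1, t2, add_comm]
  rw [hcyc, h2, Matrix.mul_smul, trace_smul, smul_eq_mul]

lemma c_add {d : ℕ} (ρ X Y M : Matrix (Fin d) (Fin d) ℂ) :
    (M * (ρ * (X + Y) - (X + Y) * ρ)).trace
      = (M * (ρ * X - X * ρ)).trace + (M * (ρ * Y - Y * ρ)).trace := by
  rw [← trace_add, ← mul_add]
  congr 1
  noncomm_ring

lemma c_sub {d : ℕ} (ρ X Y M : Matrix (Fin d) (Fin d) ℂ) :
    (M * (ρ * (X - Y) - (X - Y) * ρ)).trace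
      = (M * (ρ * X - X * ρ)).trace - (M * (ρ * Y - Y * ρ)).trace := by
  rw [← trace_sub, ← mul_sub]
  congr 1
  noncomm_ring

lemma parallelogramC {d : ℕ} (ρ Ai Aj Li Lj P Q : Matrix (Fin d) (Fin d) ℂ)
    (hi : Complex.I • (ρ * Ai - Ai * ρ) = (1 / 2 : ℂ) • (Li * ρ + ρ * Li))
    (hj : Complex.I • (ρ * Aj - Aj * ρ) = (1 / 2 : ℂ) • (Lj * ρ + ρ * Lj))
    (hp : Complex.I • (ρ * (Ai + Aj) - (Ai + Aj) * ρ) = (1 / 2 : ℂ) • (P * ρ + ρ * P))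
    (hq : Complex.I • (ρ * (Ai - Aj) - (Ai - Aj) * ρ) = (1 / 2 : ℂ) • (Q * ρ + ρ * Q)) :
    (ρ * (P * P)).trace + (ρ * (Q * Q)).trace
      = 2 * (ρ * (Li * Li)).trace + 2 * (ρ * (Lj * Lj)).trace := by
  have selfP : (ρ * (P * P + P * P)).trace = 2 * (ρ * (P * P)).trace := by
    rw [mul_add, trace_add]; ring
  have selfQ : (ρ * (Q * Q + Q * Q)).trace = 2 * (ρ * (Q * Q)).trace := by
    rw [mul_add, trace_add]; ring
  have selfI : (ρ * (Li * Li + Li * Li)).trace = 2 * (ρ * (Li * Li)).trace := by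
    rw [mul_add, trace_add]; ring
  have selfJ : (ρ * (Lj * Lj + Lj * Lj)).trace = 2 * (ρ * (Lj * Lj)).trace := by
    rw [mul_add, trace_add]; ring
  have symPI : (ρ * (P * Li + Li * P)).trace = (ρ * (Li * P + P * Li)).trace := by
    rw [add_comm]
  have symPJ : (ρ * (P * Lj + Lj * P)).trace = (ρ * (Lj * P + P * Lj)).trace := by
    rw [add_comm]
  have symQI : (ρ * (Q * Li + Li * Q)).trace = (ρ * (Li * Q + Q * Li)).trace := by
    rw [add_comm]
  have symQJ : (ρ * (Q * Lj + Lj * Q)).trace = (ρ * (Lj * Q + Q * Lj)).trace := by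
    rw [add_comm]
  have a1 := sld_trace ρ (Ai + Aj) P P hp
  have a2 := sld_trace ρ Ai Li P hi
  have a3 := sld_trace ρ Aj Lj P hj
  have a4 := sld_trace ρ (Ai + Aj) P Li hp
  have a5 := sld_trace ρ Ai Li Li hi
  have a6 := sld_trace ρ Aj Lj Li hj
  have a7 := sld_trace ρ (Ai + Aj) P Lj hp
  have a8 := sld_trace ρ Ai Li Lj hi
  have a9 := sld_trace ρ Aj Lj Lj hj
  have b1 := sld_trace ρ (Ai - Aj) Q Q hq
  have b2 := sld_trace ρ Ai Li Q hi
  have b3 := sld_trace ρ Aj Lj Q hj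
  have b4 := sld_trace ρ (Ai - Aj) Q Li hq
  have b7 := sld_trace ρ (Ai - Aj) Q Lj hq
  rw [c_add ρ Ai Aj P] at a1
  rw [c_add ρ Ai Aj Li] at a4
  rw [c_add ρ Ai Aj Lj] at a7
  rw [c_sub ρ Ai Aj Q] at b1
  rw [c_sub ρ Ai Aj Li] at b4
  rw [c_sub ρ Ai Aj Lj] at b7
  have hP : (ρ * (P * P + P * P)).trace
      = (ρ * (Li * Li + Li * Li)).trace + (ρ * (Lj * Li + Li * Lj)).trace
        + (ρ * (Li * Lj + Lj * Li)).trace + (ρ * (Lj * Lj + Lj * Lj)).trace := by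
    linear_combination a1 - a2 - a3 - symPI + a4 - a5 - a6 - symPJ + a7 - a8 - a9
  have hQ : (ρ * (Q * Q + Q * Q)).trace
      = (ρ * (Li * Li + Li * Li)).trace - (ρ * (Lj * Li + Li * Lj)).trace
        - (ρ * (Li * Lj + Lj * Li)).trace + (ρ * (Lj * Lj + Lj * Lj)).trace := by
    linear_combination b1 - b2 + b3 - symQI + b4 - a5 + a6 + symQJ - b7 + a8 - a9
  linear_combination (1/2 : ℂ) * hP + (1/2 : ℂ) * hQ - (1/2 : ℂ) * selfP
    - (1/2 : ℂ) * selfQ + selfI + selfJ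

lemma parallelogramF {d : ℕ} (ρ Ai Aj Li Lj P Q : Matrix (Fin d) (Fin d) ℂ)
    (hi : Complex.I • (ρ * Ai - Ai * ρ) = (1 / 2 : ℂ) • (Li * ρ + ρ * Li))
    (hj : Complex.I • (ρ * Aj - Aj * ρ) = (1 / 2 : ℂ) • (Lj * ρ + ρ * Lj))
    (hp : Complex.I • (ρ * (Ai + Aj) - (Ai + Aj) * ρ) = (1 / 2 : ℂ) • (P * ρ + ρ * P))
    (hq : Complex.I • (ρ * (Ai - Aj) - (Ai - Aj) * ρ) = (1 / 2 : ℂ) • (Q * ρ + ρ * Q)) :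
    fisherInfo ρ P + fisherInfo ρ Q = 2 * fisherInfo ρ Li + 2 * fisherInfo ρ Lj := by
  have h := parallelogramC ρ Ai Aj Li Lj P Q hi hj hp hq
  have hc : (1 / 4 : ℂ) * (ρ * (P * P)).trace + (1 / 4 : ℂ) * (ρ * (Q * Q)).trace
      = 2 * ((1 / 4 : ℂ) * (ρ * (Li * Li)).trace)
        + 2 * ((1 / 4 : ℂ) * (ρ * (Lj * Lj)).trace) := by
    linear_combination (1/4 : ℂ) * h
  unfold fisherInfo
  have := congrArg Complex.re hc
  simpa [Complex.add_re, Complex.mul_re] using this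

lemma fisher_nonneg {d : ℕ} {ρ Lx : Matrix (Fin d) (Fin d) ℂ}
    (hρ : ρ.PosDef) (hL : Lx.IsHermitian) :
    0 ≤ fisherInfo ρ Lx := by
  have hps : (Lx * ρ * Lx).PosSemidef := by
    have := hρ.posSemidef.mul_mul_conjTranspose_same Lx
    rwa [hL.eq] at this
  have hd : ∀ i, 0 ≤ (Lx * ρ * Lx) i i := fun i => by
    have := hps.diag_nonneg (i := i)
    simpa [Matrix.mulVec, dotProduct, Pi.single_apply, Finset.sum_ite_eq,
      Finset.sum_ite_eq'] using this
  have htr : (ρ * (Lx * Lx)).trace = (Lx * ρ * Lx).trace := by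
    rw [trace_mul_comm, Matrix.trace_mul_cycle Lx ρ Lx, mul_assoc]
  unfold fisherInfo
  rw [htr]
  have h0 : 0 ≤ (Lx * ρ * Lx).trace := Finset.sum_nonneg fun i _ => hd i
  rw [Complex.nonneg_iff] at h0
  rw [Complex.mul_re]
  norm_num
  linarith [h0.1]

/-! ### Auxiliary combinatorics -/

lemma pair_card (N : ℕ) :
    (univ.filter (fun p : Fin N × Fin N => p.1 < p.2)).card * 2 = N * (N - 1) := by
  rw [Finset.card_filter, Fintype.sum_prod_type]
  have h1 : ∀ i : Fin N, (∑ j : Fin N, if i < j then 1 else 0) = N - 1 - (i : ℕ) := by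
    intro i
    rw [← Finset.card_filter]
    rw [show (univ.filter fun j : Fin N => i < j) = Finset.Ioi i from by ext; simp]
    exact Fin.card_Ioi i
  simp only [h1]
  rw [Fin.sum_univ_eq_sum_range (fun k => N - 1 - k) N]
  rw [Finset.sum_range_reflect (fun j => j) N]
  exact Finset.sum_range_id_mul_two N

lemma pair_sum {N : ℕ} (f : Fin N → ℝ) :
    ∑ p ∈ univ.filter (fun p : Fin N × Fin N => p.1 < p.2), (f p.1 + f p.2)
      = ((N : ℝ) - 1) * ∑ i, f i := by
  rw [Finset.sum_filter, Fintype.sum_prod_type]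
  have split : ∀ i j : Fin N, (if i < j then f i + f j else 0)
      = (if i < j then f i else 0) + (if i < j then f j else 0) := by
    intro i j; split <;> simp
  simp only [split, Finset.sum_add_distrib]
  have e1 : ∀ i : Fin N, (∑ j : Fin N, if i < j then f i else 0)
      = ((N : ℝ) - 1 - (i : ℕ)) * f i := by
    intro i
    rw [← Finset.sum_filter, Finset.sum_const,
      show (univ.filter fun j : Fin N => i < j) = Finset.Ioi i from by ext; simp,
      Fin.card_Ioi, nsmul_eq_mul]
    have hi : (i : ℕ) ≤ N - 1 := Nat.le_sub_one_of_lt i.isLt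
    have hN : 1 ≤ N := Nat.one_le_of_lt i.isLt
    push_cast [Nat.cast_sub hi, Nat.cast_sub hN]
    ring
  have e2 : (∑ i : Fin N, ∑ j : Fin N, if i < j then f j else 0)
      = ∑ j : Fin N, ((j : ℕ) : ℝ) * f j := by
    rw [Finset.sum_comm]
    refine Finset.sum_congr rfl fun j _ => ?_
    rw [← Finset.sum_filter, Finset.sum_const,
      show (univ.filter fun i : Fin N => i < j) = Finset.Iio j from by ext; simp,
      Fin.card_Iio, nsmul_eq_mul]
  simp only [e1]
  rw [e2, ← Finset.sum_add_distrib, Finset.mul_sum]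
  refine Finset.sum_congr rfl fun i _ => ?_
  ring

/-- Final real arithmetic. -/
lemma final_ineq (n SP SM Q F : ℝ) (hn : 2 ≤ n)
    (hE : SP + SM = (2 * n - 2) * F)
    (hQ : Q ≤ (n * (n - 1) / 2) * SP) :
    F ≥ (1 / (2 * n - 2)) * ((2 / (n * (n - 1))) * Q + SM) := by
  have h1 : (0:ℝ) < n * (n - 1) := by nlinarith
  have h2 : (0:ℝ) < 2 * n - 2 := by nlinarith
  have h3 : (2 / (n * (n - 1))) * Q ≤ SP := by
    rw [div_mul_eq_mul_div, div_le_iff₀ h1]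
    nlinarith [hQ]
  have h4 : (2 / (n * (n - 1))) * Q + SM ≤ (2 * n - 2) * F := by
    rw [← hE]; linarith
  have h5 := mul_le_mul_of_nonneg_left h4 (le_of_lt (one_div_pos.mpr h2))
  calc (1 / (2 * n - 2)) * ((2 / (n * (n - 1))) * Q + SM)
      ≤ (1 / (2 * n - 2)) * ((2 * n - 2) * F) := h5
    _ = F := by have hn1 : n - 1 ≠ 0 := (by linarith); field_simp

theorem fisher_information_uncertainty (d N : ℕ) (hN : 2 ≤ N)
    (ρ : Matrix (Fin d) (Fin d) ℂ) (hρ : ρ.PosDef) (hTr : ρ.trace = 1)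
    (A : Fin N → Matrix (Fin d) (Fin d) ℂ) (hA : ∀ i, (A i).IsHermitian)
    -- SLDs for the individual observables
    (L : Fin N → Matrix (Fin d) (Fin d) ℂ) (hL : ∀ i, (L i).IsHermitian)
    (hLeq : ∀ i, Complex.I • (ρ * A i - A i * ρ)
      = (1 / 2 : ℂ) • (L i * ρ + ρ * L i))
    -- SLDs for the sums `A i + A j` and the differences `A i − A j`, `i < j`
    (LP LM : Fin N → Fin N → Matrix (Fin d) (Fin d) ℂ)
    (hLP : ∀ i j, i < j → (LP i j).IsHermitian)
    (hLPeq : ∀ i j, i < j → Complex.I • (ρ * (A i + A j) - (A i + A j) * ρ)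
      = (1 / 2 : ℂ) • (LP i j * ρ + ρ * LP i j))
    (hLM : ∀ i j, i < j → (LM i j).IsHermitian)
    (hLMeq : ∀ i j, i < j → Complex.I • (ρ * (A i - A j) - (A i - A j) * ρ)
      = (1 / 2 : ℂ) • (LM i j * ρ + ρ * LM i j)) :
    (∑ i, fisherInfo ρ (L i) ≥
      (1 / (2 * (N : ℝ) - 2)) *
        ((2 / ((N : ℝ) * ((N : ℝ) - 1))) *
            (∑ p ∈ univ.filter (fun p : Fin N × Fin N => p.1 < p.2),
              Real.sqrt (fisherInfo ρ (LP p.1 p.2))) ^ 2 +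
          ∑ p ∈ univ.filter (fun p : Fin N × Fin N => p.1 < p.2),
            fisherInfo ρ (LM p.1 p.2)))
    ∧
    (∑ i, fisherInfo ρ (L i) ≥
      (1 / (2 * (N : ℝ) - 2)) *
        ((2 / ((N : ℝ) * ((N : ℝ) - 1))) *
            (∑ p ∈ univ.filter (fun p : Fin N × Fin N => p.1 < p.2),
              Real.sqrt (fisherInfo ρ (LM p.1 p.2))) ^ 2 +
          ∑ p ∈ univ.filter (fun p : Fin N × Fin N => p.1 < p.2),
            fisherInfo ρ (LP p.1 p.2))) := by
  set S := univ.filter (fun p : Fin N × Fin N => p.1 < p.2) with hSdef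
  have hNR : (2:ℝ) ≤ (N:ℝ) := by exact_mod_cast hN
  have hN1 : 1 ≤ N := le_trans one_le_two hN
  -- card of S
  have hcard : ((S.card : ℝ)) = (N : ℝ) * ((N : ℝ) - 1) / 2 := by
    have h := pair_card N
    have h' : ((S.card * 2 : ℕ) : ℝ) = ((N * (N - 1) : ℕ) : ℝ) := by rw [h]
    push_cast [Nat.cast_sub hN1] at h'
    linarith
  -- parallelogram, summed
  have hpar : ∀ p ∈ S, fisherInfo ρ (LP p.1 p.2) + fisherInfo ρ (LM p.1 p.2)
      = 2 * fisherInfo ρ (L p.1) + 2 * fisherInfo ρ (L p.2) := by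
    intro p hp
    have hlt : p.1 < p.2 := (Finset.mem_filter.mp hp).2
    exact parallelogramF ρ (A p.1) (A p.2) (L p.1) (L p.2) _ _
      (hLeq p.1) (hLeq p.2) (hLPeq _ _ hlt) (hLMeq _ _ hlt)
  have hE : (∑ p ∈ S, fisherInfo ρ (LP p.1 p.2)) + (∑ p ∈ S, fisherInfo ρ (LM p.1 p.2))
      = (2 * (N : ℝ) - 2) * ∑ i, fisherInfo ρ (L i) := by
    rw [← Finset.sum_add_distrib, Finset.sum_congr rfl hpar]
    have hps := pair_sum (fun i => 2 * fisherInfo ρ (L i))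
    rw [hSdef, hps, Finset.mul_sum, Finset.mul_sum]
    exact Finset.sum_congr rfl fun i _ => by ring
  -- nonnegativity
  have hP0 : ∀ p ∈ S, (0:ℝ) ≤ fisherInfo ρ (LP p.1 p.2) := fun p hp =>
    fisher_nonneg hρ (hLP _ _ (Finset.mem_filter.mp hp).2)
  have hM0 : ∀ p ∈ S, (0:ℝ) ≤ fisherInfo ρ (LM p.1 p.2) := fun p hp =>
    fisher_nonneg hρ (hLM _ _ (Finset.mem_filter.mp hp).2)
  -- Cauchy–Schwarz
  have hcs : ∀ g : Fin N × Fin N → ℝ, (∀ p ∈ S, 0 ≤ g p) →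
      (∑ p ∈ S, Real.sqrt (g p)) ^ 2 ≤ ((N : ℝ) * ((N : ℝ) - 1) / 2) * ∑ p ∈ S, g p := by
    intro g hg
    have h := sq_sum_le_card_mul_sum_sq (s := S) (f := fun p => Real.sqrt (g p))
    have h2 : ∑ p ∈ S, Real.sqrt (g p) ^ 2 = ∑ p ∈ S, g p :=
      Finset.sum_congr rfl fun p hp => Real.sq_sqrt (hg p hp)
    rw [h2, hcard] at h
    exact h
  constructor
  · exact final_ineq (N : ℝ) _ _ _ _ hNR hE (hcs _ hP0)
  · refine final_ineq (N : ℝ) _ _ _ _ hNR ?_ (hcs _ hM0)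
    rw [add_comm]
    exact hE
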